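/- Let f : ℕ^U → ℝ be monotone (f(x) ≤ f(y) whenever x ≤ y coordinate-wise) and satisfy f(x + χ_i) - f(x) ≥ f(x + χ_j + χ_i) - f(x + χ_j) for distinct i, j as well as the diminishing returns property f(x + χ_i) - f(x) ≥ f(y + χ_i) - f(y) for x ≤ y with x_i = y_i. Then for any x ∈ ℕ^U, index u, and c ∈ ℕ, f(x ∨ c·χ_u) - f(x) ≤ f(c·χ_u) - f(0). -/
import Mathlib

theorem stmt_10 (U : ℕ) (f : (Fin U → ℕ) → ℝ)
    (hmono : ∀ x y : Fin U → ℕ, x ≤ y → f x ≤ f y)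
    (hpair : ∀ (x : Fin U → ℕ) (i j : Fin U), i ≠ j →
      f (x + Pi.single i 1) - f x ≥
        f (x + Pi.single j 1 + Pi.single i 1) - f (x + Pi.single j 1))
    (hdr : ∀ (x y : Fin U → ℕ) (i : Fin U), x ≤ y → x i = y i →
      f (x + Pi.single i 1) - f x ≥ f (y + Pi.single i 1) - f y)
    (x : Fin U → ℕ) (u : Fin U) (c : ℕ) :
    f (x ⊔ Pi.single u c) - f x ≤ f (Pi.single u c) - f 0 := by
  have key : ∀ d : ℕ, f (x + Pi.single u d) - f x ≤
      f (Pi.single u (x u + d)) - f (Pi.single u (x u)) := by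
    intro d
    induction d with
    | zero => simp
    | succ d ih =>
      have hle : (Pi.single u (x u + d) : Fin U → ℕ) ≤ x + Pi.single u d := by
        intro i
        by_cases hi : i = u
        · subst hi; simp
        · simp [Pi.single_apply, hi]
      have heq : (Pi.single u (x u + d) : Fin U → ℕ) u = ((x + Pi.single u d : Fin U → ℕ)) u := by
        simp
      have h := hdr (Pi.single u (x u + d)) (x + Pi.single u d) u hle heq
      have e1 : (Pi.single u (x u + d) : Fin U → ℕ) + Pi.single u 1
          = Pi.single u (x u + (d + 1)) := by
        rw [← Pi.single_add]; ring_nf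
      have e2 : (x + Pi.single u d : Fin U → ℕ) + Pi.single u 1
          = x + Pi.single u (d + 1) := by
        rw [add_assoc, ← Pi.single_add]
      rw [e1, e2] at h
      linarith
  by_cases hc : c ≤ x u
  · have hx : x ⊔ Pi.single u c = x := by
      refine le_antisymm (sup_le le_rfl ?_) le_sup_left
      intro i
      by_cases hi : i = u
      · subst hi; simpa using hc
      · simp [Pi.single_apply, hi]
    rw [hx]
    have := hmono 0 (Pi.single u c) (by intro i; simp)
    linarith
  · push_neg at hc
    have hx : x ⊔ Pi.single u c = x + Pi.single u (c - x u) := by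
      funext i
      by_cases hi : i = u
      · subst hi
        simp [Pi.sup_apply, Nat.max_eq_right hc.le, Nat.add_sub_cancel' hc.le]
      · simp [Pi.sup_apply, Pi.single_apply, hi]
    rw [hx]
    have h1 := key (c - x u)
    rw [Nat.add_sub_cancel' hc.le] at h1
    have h2 := hmono 0 (Pi.single u (x u)) (by intro i; simp)
    linarith
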